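/- Junction tree theorem: Let J be a tree decomposition of a finite graph G. For each bag U of J let D_U be a probability distribution over {0,1}^U. Suppose that for every edge (U,V) of J, the marginals of D_U and D_V on {0,1}^{U∩V} coincide. Then there exists a probability distribution D over {0,1}^G such that for every bag U, the marginal of D on {0,1}^U equals D_U. -/

import Mathlib

open scoped ENNReal

namespace JT

/-- Conditional distribution of `μ` given `r · = a`. -/
noncomputable def pmfCond {α γ : Type*} [DecidableEq γ] (μ : PMF α) (r : α → γ) (a : γ) :
    PMF α :=
  if h : (μ.map r) a = 0 then μ else
    ⟨fun x => if r x = a then μ x / (μ.map r) a else 0, by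
      have hm : (μ.map r) a = ∑' x, if r x = a then μ x else 0 := by
        rw [PMF.map_apply]
        exact tsum_congr fun x => by simp [eq_comm]
      have : (fun x => if r x = a then μ x / (μ.map r) a else 0)
          = fun x => (if r x = a then μ x else 0) * ((μ.map r) a)⁻¹ := by
        funext x; split <;> simp [ENNReal.div_eq_inv_mul, mul_comm]
      rw [this, Summable.hasSum_iff ENNReal.summable, ENNReal.tsum_mul_right, ← hm,
        ENNReal.mul_inv_cancel h (PMF.apply_ne_top _ _)]⟩

lemma pmfCond_apply {α γ : Type*} [DecidableEq γ] (μ : PMF α) (r : α → γ) (a : γ)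
    (h : (μ.map r) a ≠ 0) (x : α) :
    pmfCond μ r a x = if r x = a then μ x / (μ.map r) a else 0 := by
  rw [pmfCond]; exact congrArg (fun p : PMF α => p x) (dif_neg h)

lemma pmfCond_support {α γ : Type*} [DecidableEq γ] (μ : PMF α) (r : α → γ) (a : γ)
    (h : (μ.map r) a ≠ 0) (x : α) (hx : pmfCond μ r a x ≠ 0) : r x = a := by
  by_contra hne
  rw [pmfCond_apply μ r a h, if_neg hne] at hx
  exact hx rfl

lemma le_map_apply {α γ : Type*} (μ : PMF α) (r : α → γ) (x : α) :
    μ x ≤ (μ.map r) (r x) := by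
  classical
  rw [PMF.map_apply]
  have := ENNReal.le_tsum (f := fun y => if r x = r y then μ y else 0) x
  simpa using this

lemma bind_pmfCond {α γ : Type*} [DecidableEq γ] (μ : PMF α) (r : α → γ) :
    (μ.map r).bind (pmfCond μ r) = μ := by
  refine PMF.ext fun x => ?_
  rw [PMF.bind_apply]
  rw [tsum_eq_single (r x) ?_]
  · by_cases h : (μ.map r) (r x) = 0
    · have : μ x = 0 := le_antisymm (h ▸ le_map_apply μ r x) (zero_le ..)
      simp [h, this]
    · rw [pmfCond_apply μ r _ h, if_pos rfl, ENNReal.mul_div_cancel h (PMF.apply_ne_top _ _)]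
  · intro a ha
    by_cases h : (μ.map r) a = 0
    · simp [h]
    · rw [pmfCond_apply μ r a h, if_neg (fun he => ha he.symm), mul_zero]

lemma bind_congr' {α β : Type*} (p : PMF α) (f g : α → PMF β)
    (h : ∀ a, p a ≠ 0 → f a = g a) : p.bind f = p.bind g :=
  PMF.ext fun b => tsum_congr fun a => by
    by_cases ha : p a = 0
    · simp [ha]
    · rw [h a ha]

lemma map_eq_pure {α β : Type*} (p : PMF α) (f : α → β) (c : β)
    (h : ∀ a, p a ≠ 0 → f a = c) : p.map f = PMF.pure c := by
  rw [PMF.map, bind_congr' p _ (fun _ => PMF.pure c)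
    (fun a ha => by simp [Function.comp, h a ha]), PMF.bind_const]

open SimpleGraph

variable {ι : Type} (T : SimpleGraph ι)

lemma reachable_induce_of_walk {S : Set ι} {a b : ι} (W : T.Walk a b)
    (h : ∀ x ∈ W.support, x ∈ S) (ha : a ∈ S) (hb : b ∈ S) :
    (T.induce S).Reachable ⟨a, ha⟩ ⟨b, hb⟩ := by
  induction W with
  | nil => exact Reachable.refl _
  | @cons u c w huc W' ih =>
      have hc : c ∈ S := h c (by simp)
      exact (SimpleGraph.Adj.reachable
        (by exact huc : (T.induce S).Adj ⟨u, ha⟩ ⟨c, hc⟩)).trans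
        (ih (fun x hx => h x (by simp [hx])) hc hb)

lemma walk_of_reachable_induce {S : Set ι} {x y : ↥S}
    (h : (T.induce S).Reachable x y) : ∃ W : T.Walk x.1 y.1, ∀ z ∈ W.support, z ∈ S := by
  obtain ⟨w⟩ := h
  refine ⟨w.map (SimpleGraph.Embedding.induce S).toHom, ?_⟩
  intro z hz
  replace hz : z ∈ (w.map (SimpleGraph.Embedding.induce S).toHom).support := hz
  rw [SimpleGraph.Walk.support_map, List.mem_map] at hz
  obtain ⟨z', _, rfl⟩ := hz
  exact z'.2

lemma path_support_subset [DecidableEq ι] (hT : T.IsTree) {S : Set ι} (hS : (T.induce S).Connected)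
    {a b : ι} (ha : a ∈ S) (hb : b ∈ S) (P : T.Walk a b) (hP : P.IsPath) :
    ∀ x ∈ P.support, x ∈ S := by
  obtain ⟨W, hW⟩ := walk_of_reachable_induce T (hS.preconnected ⟨a, ha⟩ ⟨b, hb⟩)
  have hPE : P = W.bypass := (hT.existsUnique_path a b).unique hP W.bypass_isPath
  exact hPE ▸ fun x hx => hW x (W.support_bypass_subset hx)

lemma exists_leaf [DecidableEq ι] (hT : T.IsTree) (s : Finset ι) (hs2 : 2 ≤ s.card)
    (hc : (T.induce ↑s).Connected) :
    ∃ ℓ ∈ s, ∃ p ∈ s.erase ℓ, T.Adj ℓ p ∧ (∀ j ∈ s, T.Adj ℓ j → j = p) ∧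
      (T.induce ↑(s.erase ℓ)).Connected := by
  classical
  obtain ⟨r, hr⟩ := Finset.card_pos.mp (by omega : 0 < s.card)
  obtain ⟨ℓ, hℓs, hmax⟩ := s.exists_max_image (fun i => T.dist r i) ⟨r, hr⟩
  obtain ⟨x, hx, hxr⟩ := Finset.exists_mem_ne (s := s) (by omega) r
  have hreach : ∀ i j : ι, T.Reachable i j := fun i j => hT.isConnected.preconnected i j
  have hd1 : 1 ≤ T.dist r ℓ :=
    le_trans (hT.isConnected.pos_dist_of_ne (Ne.symm hxr)) (hmax x hx)
  have hℓr : ℓ ≠ r := by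
    rintro rfl
    simp [SimpleGraph.dist_self] at hd1
  -- the unique path from r to ℓ, with support in s
  obtain ⟨W0, hW0⟩ := walk_of_reachable_induce T
    (hc.preconnected ⟨r, Finset.mem_coe.mpr hr⟩ ⟨ℓ, Finset.mem_coe.mpr hℓs⟩)
  set R := W0.bypass with hRdef
  have hRpath : R.IsPath := W0.bypass_isPath
  have hRsupp : ∀ z ∈ R.support, z ∈ s := fun z hz =>
    Finset.mem_coe.mp (hW0 z (W0.support_bypass_subset hz))
  have hRlen : R.length = T.dist r ℓ := by
    obtain ⟨P, hP, hPlen⟩ := (hreach r ℓ).exists_path_of_dist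
    rw [(hT.existsUnique_path r ℓ).unique hRpath hP]
    exact hPlen
  obtain ⟨p, hadj, R₂, hcons⟩ := Walk.exists_eq_cons_of_ne hℓr R.reverse
  have hpsupp : p ∈ R.support := by
    have : p ∈ R.reverse.support := by rw [hcons]; simp
    rwa [Walk.support_reverse, List.mem_reverse] at this
  have hps : p ∈ s := hRsupp p hpsupp
  have hRrevpath : R.reverse.IsPath := hRpath.reverse
  have huniq : ∀ j ∈ s, T.Adj ℓ j → j = p := by
    intro j hj hadjj
    obtain ⟨Pj, hPj, hPjlen⟩ := (hreach r j).exists_path_of_dist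
    by_cases hmem : ℓ ∈ Pj.support
    · exfalso
      have heq : R = Pj.takeUntil ℓ hmem :=
        (hT.existsUnique_path r ℓ).unique hRpath (hPj.takeUntil hmem)
      have hlen1 : (Pj.takeUntil ℓ hmem).length ≤ Pj.length := Walk.length_takeUntil_le Pj hmem
      have hlen2 : Pj.length ≤ T.dist r ℓ := by rw [hPjlen]; exact hmax j hj
      have hlen3 : (Pj.takeUntil ℓ hmem).length = Pj.length := by
        have := hRlen
        rw [heq] at this
        omega
      have hspec := Pj.take_spec hmem
      have hlen4 := congrArg Walk.length hspec
      rw [Walk.length_append] at hlen4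
      have : (Pj.dropUntil ℓ hmem).length = 0 := by omega
      have : ℓ = j := Walk.eq_of_length_eq_zero this
      exact hadjj.ne this
    · have hpath2 : (Walk.cons hadjj Pj.reverse).IsPath := by
        rw [Walk.cons_isPath_iff]
        exact ⟨hPj.reverse, by simpa using hmem⟩
      have heq : R.reverse = Walk.cons hadjj Pj.reverse :=
        (hT.existsUnique_path ℓ r).unique hRrevpath hpath2
      rw [hcons] at heq
      have := congrArg (fun w => Walk.getVert w 1) heq
      simpa [Walk.getVert_cons_succ] using this.symm
  have hpℓ : p ≠ ℓ := hadj.ne'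
  have hpe : p ∈ s.erase ℓ := Finset.mem_erase.mpr ⟨hpℓ, hps⟩
  have hrecon : ∀ a (ha : a ∈ s.erase ℓ),
      (T.induce ↑(s.erase ℓ)).Reachable ⟨p, Finset.mem_coe.mpr hpe⟩ ⟨a, Finset.mem_coe.mpr ha⟩ := by
    intro a ha
    obtain ⟨haℓ, has⟩ := Finset.mem_erase.mp ha
    obtain ⟨Wa, hWa⟩ := walk_of_reachable_induce T
      (hc.preconnected ⟨a, Finset.mem_coe.mpr has⟩ ⟨ℓ, Finset.mem_coe.mpr hℓs⟩)
    set Q := Wa.bypass with hQdef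
    have hQpath : Q.IsPath := Wa.bypass_isPath
    have hQsupp : ∀ z ∈ Q.support, z ∈ s := fun z hz =>
      Finset.mem_coe.mp (hWa z (Wa.support_bypass_subset hz))
    obtain ⟨j, hadjj, Q₂, hconsQ⟩ := Walk.exists_eq_cons_of_ne (Ne.symm haℓ) Q.reverse
    have hQrev : Q.reverse.IsPath := hQpath.reverse
    rw [hconsQ, Walk.cons_isPath_iff] at hQrev
    have hQ₂s : ∀ z ∈ Q₂.support, z ∈ s := by
      intro z hz
      have : z ∈ Q.reverse.support := by rw [hconsQ]; simp [hz]
      rw [Walk.support_reverse, List.mem_reverse] at this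
      exact hQsupp z this
    have hjs : j ∈ s := hQ₂s j Q₂.start_mem_support
    have hjp : j = p := huniq j hjs hadjj
    subst hjp
    have hQ₂e : ∀ z ∈ Q₂.support, z ∈ (↑(s.erase ℓ) : Set ι) := by
      intro z hz
      refine Finset.mem_coe.mpr (Finset.mem_erase.mpr ⟨?_, hQ₂s z hz⟩)
      rintro rfl
      exact hQrev.2 hz
    exact reachable_induce_of_walk T Q₂ hQ₂e _ _
  refine ⟨ℓ, hℓs, p, hpe, hadj, huniq, ?_⟩
  haveI : Nonempty (↑(s.erase ℓ) : Set ι) := ⟨⟨p, Finset.mem_coe.mpr hpe⟩⟩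
  exact ⟨fun x y => ((hrecon x.1 (Finset.mem_coe.mp x.2)).symm.trans
    (hrecon y.1 (Finset.mem_coe.mp y.2)))⟩


section Main

variable {V ι : Type} [Fintype V] [DecidableEq V] [Fintype ι]

lemma aux [DecidableEq ι] (T : SimpleGraph ι) (bag : ι → Finset V)
    (htree : T.IsTree)
    (hconn : ∀ u : V, (∃ i, u ∈ bag i) ∧ (T.induce {i | u ∈ bag i}).Connected)
    (D : (i : ι) → PMF ({v : V // v ∈ bag i} → Bool))
    (hagree : ∀ i j, T.Adj i j →
      (D i).map (fun f (v : {v : V // v ∈ bag i ∩ bag j}) =>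
          f ⟨v.1, (Finset.mem_inter.mp v.2).1⟩) =
      (D j).map (fun f (v : {v : V // v ∈ bag i ∩ bag j}) =>
          f ⟨v.1, (Finset.mem_inter.mp v.2).2⟩)) :
    ∀ (n : ℕ) (s : Finset ι), s.card = n → s.Nonempty → (T.induce ↑s).Connected →
      ∃ D' : PMF (V → Bool),
        ∀ i ∈ s, D'.map (fun x (v : {v : V // v ∈ bag i}) => x v.1) = D i := by
  classical
  intro n
  induction n with
  | zero =>
    intro s hcard hne _
    exact absurd (Finset.card_eq_zero.mp hcard) hne.ne_empty
  | succ n ih =>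
    intro s hcard hne hconns
    by_cases h1 : s.card ≤ 1
    · -- base case : a single bag
      obtain ⟨i₀, rfl⟩ := Finset.card_eq_one.mp (le_antisymm h1 (Finset.card_pos.mpr hne))
      refine ⟨(D i₀).map (fun y v => if h : v ∈ bag i₀ then y ⟨v, h⟩ else false), ?_⟩
      intro i hi
      rw [Finset.mem_singleton] at hi
      subst hi
      rw [PMF.map_comp]
      have : ((fun x (v : {v : V // v ∈ bag i}) => x v.1) ∘
          (fun y (v : V) => if h : v ∈ bag i then y ⟨v, h⟩ else false)) = id := by
        funext y
        funext v
        simp [Function.comp]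
      rw [this, PMF.map_id]
    · -- inductive step : remove a leaf ℓ with unique neighbour p
      obtain ⟨ℓ, hℓs, p, hpe, hadj, huniq, hconne⟩ :=
        exists_leaf T htree s (by omega) hconns
      have hps : p ∈ s := (Finset.mem_erase.mp hpe).2
      obtain ⟨D'', hD''⟩ := ih (s.erase ℓ)
        (by rw [Finset.card_erase_of_mem hℓs, hcard]; rfl) ⟨p, hpe⟩ hconne
      -- separator property
      have hsep : ∀ i ∈ s, i ≠ ℓ → ∀ v : V, v ∈ bag ℓ → v ∈ bag i → v ∈ bag p := by
        intro i hi hne v hvℓ hvi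
        have hCc : (T.induce {j | v ∈ bag j}).Connected := (hconn v).2
        obtain ⟨W⟩ := htree.isConnected.preconnected ℓ i
        have hRpath : W.bypass.IsPath := W.bypass_isPath
        have hRC : ∀ x ∈ W.bypass.support, x ∈ {j | v ∈ bag j} :=
          path_support_subset T htree hCc hvℓ hvi W.bypass hRpath
        have hRs : ∀ x ∈ W.bypass.support, x ∈ (↑s : Set ι) :=
          path_support_subset T htree hconns (Finset.mem_coe.mpr hℓs)
            (Finset.mem_coe.mpr hi) W.bypass hRpath
        obtain ⟨j, hadjj, R', hconsR⟩ := Walk.exists_eq_cons_of_ne (Ne.symm hne) W.bypass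
        have hjsupp : j ∈ W.bypass.support := by rw [hconsR]; simp
        have hjp : j = p := huniq j (Finset.mem_coe.mp (hRs j hjsupp)) hadjj
        exact hjp ▸ (hRC j hjsupp)
      -- notation
      set q : ({v : V // v ∈ bag ℓ} → Bool) → ({v : V // v ∈ bag ℓ ∩ bag p} → Bool) :=
        fun f v => f ⟨v.1, (Finset.mem_inter.mp v.2).1⟩ with hq
      set rS : (V → Bool) → ({v : V // v ∈ bag ℓ ∩ bag p} → Bool) :=
        fun x v => x v.1 with hrS
      -- the marginal of D'' on the separator agrees with that of D ℓ
      have fact1 : D''.map rS = (D ℓ).map q := by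
        have h1 : D''.map (fun x (v : {v : V // v ∈ bag p}) => x v.1) = D p :=
          hD'' p hpe
        have h2 : rS = (fun f (v : {v : V // v ∈ bag ℓ ∩ bag p}) =>
            f ⟨v.1, (Finset.mem_inter.mp v.2).2⟩) ∘
            (fun x (v : {v : V // v ∈ bag p}) => x v.1) := rfl
        rw [h2, ← PMF.map_comp, h1, ← hagree ℓ p hadj]
      set cond := pmfCond (D ℓ) q with hcond
      set glue : (V → Bool) → ({v : V // v ∈ bag ℓ} → Bool) → (V → Bool) :=
        fun x y v => if h : v ∈ bag ℓ then y ⟨v, h⟩ else x v with hglue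
      refine ⟨D''.bind (fun x => (cond (rS x)).map (glue x)), ?_⟩
      intro i hi
      by_cases hiℓ : i = ℓ
      · subst hiℓ
        rw [PMF.map_bind]
        have h3 : ∀ x, ((cond (rS x)).map (glue x)).map
            (fun x (v : {v : V // v ∈ bag i}) => x v.1) = cond (rS x) := by
          intro x
          rw [PMF.map_comp]
          have : ((fun x (v : {v : V // v ∈ bag i}) => x v.1) ∘ glue x) = id := by
            funext y
            funext v
            simp [hglue, v.2]
          rw [this, PMF.map_id]
        simp only [h3]
        have h4 : D''.bind (fun x => cond (rS x)) = (D''.map rS).bind cond := by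
          rw [PMF.bind_map]
          rfl
        rw [h4, fact1, hcond, bind_pmfCond]
      · have hie : i ∈ s.erase ℓ := Finset.mem_erase.mpr ⟨hiℓ, hi⟩
        rw [PMF.map_bind]
        have h5 : D''.bind (fun x => ((cond (rS x)).map (glue x)).map
            (fun x (v : {v : V // v ∈ bag i}) => x v.1)) =
            D''.bind (fun x => PMF.pure (fun (v : {v : V // v ∈ bag i}) => x v.1)) := by
          apply bind_congr'
          intro x hx
          rw [PMF.map_comp]
          apply map_eq_pure
          intro y hy
          have hm : ((D ℓ).map q) (rS x) ≠ 0 := by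
            rw [← fact1]
            intro h0
            exact hx (le_antisymm (h0 ▸ le_map_apply D'' rS x) (zero_le ..))
          have hqy : q y = rS x := pmfCond_support (D ℓ) q (rS x) hm y hy
          funext v
          show glue x y v.1 = x v.1
          by_cases hvℓ : v.1 ∈ bag ℓ
          · have hvp : v.1 ∈ bag p := hsep i hi hiℓ v.1 hvℓ v.2
            have hvS : v.1 ∈ bag ℓ ∩ bag p := Finset.mem_inter.mpr ⟨hvℓ, hvp⟩
            have h6 := congrFun hqy ⟨v.1, hvS⟩
            simp only [hglue, dif_pos hvℓ]
            exact h6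
          · simp only [hglue, dif_neg hvℓ]
        rw [h5]
        have h7 : D''.bind (fun x => PMF.pure (fun (v : {v : V // v ∈ bag i}) => x v.1)) =
            D''.map (fun x (v : {v : V // v ∈ bag i}) => x v.1) := rfl
        rw [h7, hD'' i hie]

theorem stmt1' (T : SimpleGraph ι) (bag : ι → Finset V)
    (htree : T.IsTree)
    (hconn : ∀ u : V, (∃ i, u ∈ bag i) ∧ (T.induce {i | u ∈ bag i}).Connected)
    (D : (i : ι) → PMF ({v : V // v ∈ bag i} → Bool))
    (hagree : ∀ i j, T.Adj i j →
      (D i).map (fun f (v : {v : V // v ∈ bag i ∩ bag j}) =>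
          f ⟨v.1, (Finset.mem_inter.mp v.2).1⟩) =
      (D j).map (fun f (v : {v : V // v ∈ bag i ∩ bag j}) =>
          f ⟨v.1, (Finset.mem_inter.mp v.2).2⟩)) :
    ∃ D' : PMF (V → Bool),
      ∀ i : ι, D'.map (fun x (v : {v : V // v ∈ bag i}) => x v.1) = D i := by
  classical
  haveI : Nonempty ι := htree.isConnected.nonempty
  have hconnuniv : (T.induce (↑(Finset.univ : Finset ι) : Set ι)).Connected := by
    haveI : Nonempty (↑(Finset.univ : Finset ι) : Set ι) :=
      ⟨⟨Classical.arbitrary ι, by simp⟩⟩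
    refine ⟨fun x y => ?_⟩
    obtain ⟨W⟩ := htree.isConnected.preconnected x.1 y.1
    exact reachable_induce_of_walk T W (fun z _ => by simp) x.2 y.2
  obtain ⟨D', hD'⟩ := aux T bag htree hconn D hagree (Finset.univ.card) Finset.univ rfl
    Finset.univ_nonempty hconnuniv
  exact ⟨D', fun i => hD' i (Finset.mem_univ i)⟩

end Main
end JT


/-- Junction tree theorem. Let `T` (on finite index type `ι`) be a tree
decomposition of the finite vertex set `V` (with bags `bag i`, every vertex lying in a
nonempty connected set of bags). Given, for each bag, a distribution `D i` over
`{0,1}^{bag i}` such that adjacent bags agree on the marginal over their intersection,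
there is a distribution `D` over `{0,1}^V` whose marginal on every bag `i` is `D i`. -/
theorem stmt1 {V ι : Type} [Fintype V] [DecidableEq V] [Fintype ι]
    (T : SimpleGraph ι) (bag : ι → Finset V)
    (htree : T.IsTree)
    (hconn : ∀ u : V, (∃ i, u ∈ bag i) ∧ (T.induce {i | u ∈ bag i}).Connected)
    (D : (i : ι) → PMF ({v : V // v ∈ bag i} → Bool))
    (hagree : ∀ i j, T.Adj i j →
      (D i).map (fun f (v : {v : V // v ∈ bag i ∩ bag j}) =>
          f ⟨v.1, (Finset.mem_inter.mp v.2).1⟩) =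
      (D j).map (fun f (v : {v : V // v ∈ bag i ∩ bag j}) =>
          f ⟨v.1, (Finset.mem_inter.mp v.2).2⟩)) :
    ∃ D' : PMF (V → Bool),
      ∀ i : ι, D'.map (fun x (v : {v : V // v ∈ bag i}) => x v.1) = D i := by
  exact JT.stmt1' T bag htree hconn D hagree
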